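/- arXiv:2110.08320 — 2 statements merged into one kernel-verified Lean document; each statement's English description precedes it below -/
import Mathlib

section
/- Let H ∈ (0,1/2) and let C_H := ∫₀^∞ (y^{H-1/2} - (y+1)^{H-1/2})² dy < ∞. Then for every t ≥ 0 and every ε > 0, ∫₀^t (K(t,s) - K(t+ε,s))² ds ≤ C_H·ε^{2H}/Γ(H+1/2)². -/
open Real MeasureTheory

/-- For `a ≤ 0` and `0 < y`, the difference `y^a - (y+1)^a` is nonnegative. -/
lemma aux_diff_nonneg {a y : ℝ} (ha : a ≤ 0) (hy : 0 < y) :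
    0 ≤ y ^ a - (y + 1) ^ a :=
  sub_nonneg.2 (Real.rpow_le_rpow_of_nonpos hy (by linarith) ha)

/-- Mean-value type bound: for `a < 0` and `1 ≤ y`,
`y^a - (y+1)^a ≤ (-a) * y^(a-1)`. -/
lemma aux_diff_le {a y : ℝ} (ha : a < 0) (hy : 1 ≤ y) :
    y ^ a - (y + 1) ^ a ≤ (-a) * y ^ (a - 1) := by
  have hy0 : (0:ℝ) < y := lt_of_lt_of_le one_pos hy
  have hmem : (0:ℝ) ∉ Set.uIcc y (y + 1) := by
    rw [Set.uIcc_of_le (by linarith)]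
    intro h
    exact absurd h.1 (by linarith)
  have hI : (∫ x in y..(y+1), x ^ (a - 1)) = ((y+1) ^ a - y ^ a) / a := by
    rw [integral_rpow (Or.inr ⟨by intro h; linarith [ha], hmem⟩)]
    ring_nf
  have hle : (∫ x in y..(y+1), x ^ (a - 1)) ≤ ∫ _x in y..(y+1), y ^ (a - 1) := by
    apply intervalIntegral.integral_mono_on (by linarith)
    · exact intervalIntegral.intervalIntegrable_rpow (Or.inr hmem)
    · exact intervalIntegrable_const
    · intro x hx
      exact Real.rpow_le_rpow_of_nonpos hy0 hx.1 (by linarith)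
  rw [intervalIntegral.integral_const] at hle
  have h2 : ((y+1) ^ a - y ^ a) / a ≤ (y + 1 - y) • y ^ (a - 1) := hI ▸ hle
  simp only [smul_eq_mul, add_sub_cancel_left, one_mul] at h2
  rw [div_le_iff_of_neg ha] at h2
  linarith

/-- For `H ∈ (0,1/2)`, with
`C_H = ∫₀^∞ (y^{H-1/2} - (y+1)^{H-1/2})² dy < ∞` (the integrand is integrable on `(0,∞)`),
for every `t ≥ 0` and `ε > 0`,
`∫₀^t (K(t,s) - K(t+ε,s))² ds ≤ C_H ε^{2H}/Γ(H+1/2)²`, where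
`K(t,s) = (t-s)^{H-1/2}/Γ(H+1/2)` and `K(t+ε,s) = (t+ε-s)^{H-1/2}/Γ(H+1/2)`. -/
theorem stmt_10 (H : ℝ) (hH : H ∈ Set.Ioo (0 : ℝ) (1/2)) :
    IntegrableOn (fun y : ℝ => (y ^ (H - 1/2) - (y + 1) ^ (H - 1/2)) ^ 2) (Set.Ioi 0) ∧
    ∀ t ε : ℝ, 0 ≤ t → 0 < ε →
      (∫ s in (0:ℝ)..t,
          ((t - s) ^ (H - 1/2) / Real.Gamma (H + 1/2)
            - (t + ε - s) ^ (H - 1/2) / Real.Gamma (H + 1/2)) ^ 2)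
        ≤ (∫ y in Set.Ioi (0:ℝ), (y ^ (H - 1/2) - (y + 1) ^ (H - 1/2)) ^ 2)
            * ε ^ (2 * H) / Real.Gamma (H + 1/2) ^ 2 := by
  obtain ⟨hH0, hH2⟩ := hH
  set a : ℝ := H - 1/2 with ha_def
  have ha0 : a < 0 := by rw [ha_def]; linarith
  have ha1 : -1/2 < a := by rw [ha_def]; linarith
  set g : ℝ → ℝ := fun y => (y ^ a - (y + 1) ^ a) ^ 2 with hg_def
  -- measurability
  have hg_cont : ContinuousOn g (Set.Ioi 0) := by
    apply ContinuousOn.pow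
    apply ContinuousOn.sub
    · exact continuousOn_id.rpow_const (fun x hx => Or.inl (ne_of_gt hx))
    · exact (continuousOn_id.add continuousOn_const).rpow_const
        (fun x hx => Or.inl (by have := Set.mem_Ioi.mp hx; intro h; simp only [Pi.add_apply, id] at h; linarith))
  -- integrability
  have hint : IntegrableOn g (Set.Ioi 0) := by
    have hsplit : Set.Ioi (0:ℝ) = Set.Ioc 0 1 ∪ Set.Ioi 1 := by
      rw [Set.Ioc_union_Ioi_eq_Ioi]; norm_num
    rw [hsplit]
    apply IntegrableOn.union
    · -- on (0,1]: dominate by y^(2a)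
      have h2a : (-1:ℝ) < 2 * a := by rw [ha_def]; linarith
      have hdom : IntegrableOn (fun y : ℝ => y ^ (2 * a)) (Set.Ioc 0 1) :=
        (intervalIntegral.intervalIntegrable_rpow' (a := 0) (b := 1)
          (r := 2 * a) h2a).1
      apply Integrable.mono' hdom
        ((hg_cont.mono Set.Ioc_subset_Ioi_self).aestronglyMeasurable measurableSet_Ioc)
      filter_upwards [ae_restrict_mem measurableSet_Ioc] with y hy
      have hy0 : (0:ℝ) < y := hy.1
      have h1 : 0 ≤ y ^ a - (y + 1) ^ a := aux_diff_nonneg ha0.le hy0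
      have h2 : y ^ a - (y + 1) ^ a ≤ y ^ a := by
        have : 0 ≤ (y+1) ^ a := Real.rpow_nonneg (by linarith) a
        linarith
      rw [Real.norm_eq_abs, abs_of_nonneg (sq_nonneg _)]
      calc (y ^ a - (y + 1) ^ a) ^ 2 ≤ (y ^ a) ^ 2 := by nlinarith
      _ = y ^ (2 * a) := by
          rw [← Real.rpow_natCast (y ^ a) 2, ← Real.rpow_mul hy0.le]
          norm_num [mul_comm]
    · -- on (1,∞): dominate by a^2 * y^(2a-2)
      have hdom : IntegrableOn (fun y : ℝ => a ^ 2 * y ^ (2 * a - 2)) (Set.Ioi 1) :=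
        (integrableOn_Ioi_rpow_of_lt (by linarith) one_pos).const_mul _
      apply Integrable.mono' hdom
        ((hg_cont.mono (Set.Ioi_subset_Ioi (by norm_num))).aestronglyMeasurable
          measurableSet_Ioi)
      filter_upwards [ae_restrict_mem measurableSet_Ioi] with y hy
      have hy1 : (1:ℝ) ≤ y := le_of_lt hy
      have hy0 : (0:ℝ) < y := lt_of_lt_of_le one_pos hy1
      have h1 : 0 ≤ y ^ a - (y + 1) ^ a := aux_diff_nonneg ha0.le hy0
      have h2 : y ^ a - (y + 1) ^ a ≤ (-a) * y ^ (a - 1) := aux_diff_le ha0 hy1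
      have h3 : 0 ≤ y ^ (a - 1) := Real.rpow_nonneg hy0.le _
      rw [Real.norm_eq_abs, abs_of_nonneg (sq_nonneg _)]
      calc (y ^ a - (y + 1) ^ a) ^ 2 ≤ ((-a) * y ^ (a - 1)) ^ 2 := by nlinarith
      _ = a ^ 2 * y ^ (2 * a - 2) := by
          have hy2 : (y ^ (a - 1)) ^ 2 = y ^ (2 * a - 2) := by
            rw [← Real.rpow_natCast (y ^ (a - 1)) 2, ← Real.rpow_mul hy0.le]
            congr 1
            push_cast
            ring
          rw [mul_pow, neg_sq, hy2]
  refine ⟨hint, fun t ε ht hε => ?_⟩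
  have hΓ : 0 < Real.Gamma (H + 1/2) := Real.Gamma_pos_of_pos (by linarith)
  have hΓ2 : 0 < Real.Gamma (H + 1/2) ^ 2 := pow_pos hΓ 2
  have hT : 0 ≤ t / ε := div_nonneg ht hε.le
  set F : ℝ → ℝ := fun u => (u ^ a - (u + ε) ^ a) ^ 2 with hF_def
  -- step 1: pull out the Gamma factor and shift variables
  have step1 : (∫ s in (0:ℝ)..t,
        ((t - s) ^ a / Real.Gamma (H + 1/2) - (t + ε - s) ^ a / Real.Gamma (H + 1/2)) ^ 2)
      = (∫ u in (0:ℝ)..t, F u) / Real.Gamma (H + 1/2) ^ 2 := by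
    have : ∀ s : ℝ, ((t - s) ^ a / Real.Gamma (H + 1/2)
        - (t + ε - s) ^ a / Real.Gamma (H + 1/2)) ^ 2
        = F (t - s) / Real.Gamma (H + 1/2) ^ 2 := by
      intro s
      rw [div_sub_div_same, div_pow, hF_def]
      have : t + ε - s = (t - s) + ε := by ring
      rw [this]
    simp_rw [this]
    rw [intervalIntegral.integral_div, intervalIntegral.integral_comp_sub_left F t]
    simp
  -- step 2: scaling substitution u = ε y
  have step2 : (∫ u in (0:ℝ)..t, F u) = ε * ∫ y in (0:ℝ)..(t/ε), F (ε * y) := by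
    rw [← smul_eq_mul, intervalIntegral.smul_integral_comp_mul_left F ε]
    rw [mul_zero, mul_div_cancel₀ _ (ne_of_gt hε)]
  -- step 3: factor out ε^(2a)
  have step3 : (∫ y in (0:ℝ)..(t/ε), F (ε * y))
      = ε ^ (2 * a) * ∫ y in Set.Ioc 0 (t/ε), g y := by
    rw [intervalIntegral.integral_of_le hT, ← MeasureTheory.integral_const_mul]
    apply MeasureTheory.setIntegral_congr_fun measurableSet_Ioc
    intro y hy
    have hy0 : (0:ℝ) < y := hy.1
    have h1 : (ε * y) ^ a = ε ^ a * y ^ a := Real.mul_rpow hε.le hy0.le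
    have h2 : (ε * y + ε) ^ a = ε ^ a * (y + 1) ^ a := by
      rw [show ε * y + ε = ε * (y + 1) by ring, Real.mul_rpow hε.le (by linarith)]
    simp only [hF_def, hg_def]
    rw [h1, h2, ← mul_sub, mul_pow, ← Real.rpow_natCast (ε ^ a) 2, ← Real.rpow_mul hε.le]
    norm_num [mul_comm]
  -- step 4: bound the truncated integral by the full one
  have step4 : (∫ y in Set.Ioc 0 (t/ε), g y) ≤ ∫ y in Set.Ioi (0:ℝ), g y := by
    apply MeasureTheory.setIntegral_mono_set hint
    · exact Filter.Eventually.of_forall fun y => sq_nonneg _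
    · exact Filter.Eventually.of_forall Set.Ioc_subset_Ioi_self
  -- combine
  have hεpow : ε * ε ^ (2 * a) = ε ^ (2 * H) := by
    rw [show (2 * a) = 2 * H - 1 by rw [ha_def]; ring]
    calc ε * ε ^ (2 * H - 1) = ε ^ (1:ℝ) * ε ^ (2 * H - 1) := by rw [Real.rpow_one]
      _ = ε ^ (1 + (2 * H - 1)) := (Real.rpow_add hε _ _).symm
      _ = ε ^ (2 * H) := by norm_num
  calc (∫ s in (0:ℝ)..t,
        ((t - s) ^ a / Real.Gamma (H + 1/2) - (t + ε - s) ^ a / Real.Gamma (H + 1/2)) ^ 2)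
      = ε ^ (2 * H) * (∫ y in Set.Ioc 0 (t/ε), g y) / Real.Gamma (H + 1/2) ^ 2 := by
        rw [step1, step2, step3, ← mul_assoc, hεpow]
    _ ≤ ε ^ (2 * H) * (∫ y in Set.Ioi (0:ℝ), g y) / Real.Gamma (H + 1/2) ^ 2 := by
        have h0 : (0:ℝ) ≤ ε ^ (2 * H) := Real.rpow_nonneg hε.le _
        gcongr
    _ = (∫ y in Set.Ioi (0:ℝ), g y) * ε ^ (2 * H) / Real.Gamma (H + 1/2) ^ 2 := by
        ring
end

section
/- Let G : ℝ → ℝ be twice continuously differentiable on a neighborhood of v ∈ ℝ, and fix μ ∈ ℝ and v₂ ≥ 0. For h, h' > 0 define q₋ = (v₂ - μh')/(h(h+h')), q₀ = (-v₂ + μ(h'-h))/(hh'), q₊ = (v₂ + μh)/(h'(h+h')). Then q₋·G(v-h) + q₀·G(v) + q₊·G(v+h') → μ·G'(v) + (v₂/2)·G''(v) as (h,h') → (0⁺,0⁺). -/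
open Filter

lemma peano_aux {G : ℝ → ℝ} {v : ℝ} {u : Set ℝ} (hu : IsOpen u) (hvu : v ∈ u)
    (hdiff : ∀ x ∈ u, HasDerivAt G (deriv G x) x)
    (h2 : HasDerivAt (deriv G) (deriv (deriv G) v) v) :
    (fun t : ℝ => G (v + t) - G v - t * deriv G v - t ^ 2 / 2 * deriv (deriv G) v)
      =o[nhds 0] fun t => t ^ 2 := by
  set a := deriv G v with ha
  set c := deriv (deriv G) v with hc
  rw [Asymptotics.isLittleO_iff]
  intro ε hε
  have h2o : (fun x => deriv G x - a - (x - v) * c) =o[nhds v] fun x => x - v := by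
    simpa [smul_eq_mul, mul_comm] using hasDerivAt_iff_isLittleO.mp h2
  rw [Asymptotics.isLittleO_iff] at h2o
  have hb : ∀ᶠ x in nhds v, ‖deriv G x - a - (x - v) * c‖ ≤ ε * ‖x - v‖ ∧ x ∈ u :=
    (h2o hε).and (hu.mem_nhds hvu)
  obtain ⟨δ, hδpos, hδ⟩ := Metric.eventually_nhds_iff.mp hb
  have hball : Metric.ball (0 : ℝ) δ ∈ nhds (0 : ℝ) := Metric.ball_mem_nhds 0 hδpos
  filter_upwards [hball] with t ht
  have ht' : |t| < δ := by simpa [Real.dist_eq] using ht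
  set φ : ℝ → ℝ := fun x => G x - x * a - (x - v) ^ 2 / 2 * c with hφ
  have hseg : ∀ x ∈ segment ℝ v (v + t), dist x v < δ ∧ x ∈ u ∧ dist x v ≤ |t| := by
    intro x hx
    rw [segment_eq_uIcc] at hx
    have hd : dist x v ≤ dist v (v + t) :=
      Real.dist_le_of_mem_uIcc hx (Set.left_mem_uIcc)
    have hdt : dist v (v + t) = |t| := by
      rw [Real.dist_eq]; simp [abs_sub_comm]
    rw [hdt] at hd
    have := hδ (lt_of_le_of_lt hd ht')
    exact ⟨lt_of_le_of_lt hd ht', this.2, hd⟩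
  have hderiv : ∀ x ∈ segment ℝ v (v + t),
      HasDerivWithinAt φ (deriv G x - a - (x - v) * c) (segment ℝ v (v + t)) x := by
    intro x hx
    have hxu : x ∈ u := (hseg x hx).2.1
    have h1 : HasDerivAt φ (deriv G x - 1 * a - 2 * (x - v) ^ 1 * 1 / 2 * c) x := by
      exact (((hdiff x hxu).sub ((hasDerivAt_id x).mul_const a)).sub
        (((((hasDerivAt_id x).sub_const v).pow 2).div_const 2).mul_const c))
    have : deriv G x - 1 * a - 2 * (x - v) ^ 1 * 1 / 2 * c
        = deriv G x - a - (x - v) * c := by ring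
    rw [this] at h1
    exact h1.hasDerivWithinAt
  have hbound : ∀ x ∈ segment ℝ v (v + t),
      ‖deriv G x - a - (x - v) * c‖ ≤ ε * |t| := by
    intro x hx
    obtain ⟨hx1, hx2, hx3⟩ := hseg x hx
    have := (hδ hx1).1
    refine this.trans ?_
    have : ‖x - v‖ ≤ |t| := by simpa [Real.dist_eq] using hx3
    exact mul_le_mul_of_nonneg_left this (le_of_lt hε)
  have key := (convex_segment v (v + t)).norm_image_sub_le_of_norm_hasDerivWithin_le
    hderiv hbound (left_mem_segment ℝ v (v + t)) (right_mem_segment ℝ v (v + t))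
  have hRφ : G (v + t) - G v - t * a - t ^ 2 / 2 * c = φ (v + t) - φ v := by
    simp only [hφ]; ring
  rw [hRφ]
  refine key.trans (le_of_eq ?_)
  rw [Real.norm_eq_abs, Real.norm_eq_abs]
  have : |v + t - v| = |t| := by ring_nf
  rw [this, abs_pow]
  ring

/-- Let `G : ℝ → ℝ` be twice continuously differentiable near `v`, `μ ∈ ℝ`,
`v₂ ≥ 0`. With the moment-matched CTMC rates
`q₋ = (v₂ - μh')/(h(h+h'))`, `q₀ = (-v₂ + μ(h'-h))/(hh')`, `q₊ = (v₂ + μh)/(h'(h+h'))`,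
one has `q₋ G(v-h) + q₀ G(v) + q₊ G(v+h') → μ G'(v) + (v₂/2) G''(v)` as
`(h,h') → (0⁺,0⁺)`. -/
theorem stmt_16 (G : ℝ → ℝ) (v : ℝ) (s : Set ℝ) (hs : s ∈ nhds v)
    (hG : ContDiffOn ℝ 2 G s) (μ v₂ : ℝ) (hv₂ : 0 ≤ v₂) :
    Filter.Tendsto
      (fun p : ℝ × ℝ =>
        (v₂ - μ * p.2) / (p.1 * (p.1 + p.2)) * G (v - p.1)
          + (-v₂ + μ * (p.2 - p.1)) / (p.1 * p.2) * G v
          + (v₂ + μ * p.1) / (p.2 * (p.1 + p.2)) * G (v + p.2))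
      ((nhdsWithin 0 (Set.Ioi 0)) ×ˢ (nhdsWithin 0 (Set.Ioi 0)))
      (nhds (μ * deriv G v + v₂ / 2 * deriv (deriv G) v)) := by
  set u := interior s with hudef
  have hu : IsOpen u := isOpen_interior
  have hvu : v ∈ u := mem_interior_iff_mem_nhds.mpr hs
  have hGu : ContDiffOn ℝ 2 G u := hG.mono interior_subset
  have hdG : DifferentiableOn ℝ G u := hGu.differentiableOn (by norm_num)
  have hdiff : ∀ x ∈ u, HasDerivAt G (deriv G x) x := fun x hx =>
    ((hdG x hx).differentiableAt (hu.mem_nhds hx)).hasDerivAt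
  have hG1 : ContDiffOn ℝ 1 (deriv G) u := hGu.deriv_of_isOpen hu (by norm_num)
  have hd2 : DifferentiableAt ℝ (deriv G) v :=
    ((hG1.differentiableOn one_ne_zero) v hvu).differentiableAt (hu.mem_nhds hvu)
  have h2 : HasDerivAt (deriv G) (deriv (deriv G) v) v := hd2.hasDerivAt
  set a := deriv G v with ha
  set c := deriv (deriv G) v with hc
  set R : ℝ → ℝ := fun t => G (v + t) - G v - t * a - t ^ 2 / 2 * c with hRdef
  have hR : R =o[nhds 0] fun t => t ^ 2 := peano_aux hu hvu hdiff h2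
  have hq : Tendsto (fun t => R t / t ^ 2) (nhds 0) (nhds 0) := hR.tendsto_div_nhds_zero
  set L := (nhdsWithin (0:ℝ) (Set.Ioi 0)) ×ˢ (nhdsWithin (0:ℝ) (Set.Ioi 0)) with hLdef
  have h1 : Tendsto (fun p : ℝ × ℝ => p.1) L (nhds 0) :=
    (tendsto_fst (f := nhdsWithin (0:ℝ) (Set.Ioi 0))
      (g := nhdsWithin (0:ℝ) (Set.Ioi 0))).mono_right nhdsWithin_le_nhds
  have h2' : Tendsto (fun p : ℝ × ℝ => p.2) L (nhds 0) :=
    (tendsto_snd (f := nhdsWithin (0:ℝ) (Set.Ioi 0))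
      (g := nhdsWithin (0:ℝ) (Set.Ioi 0))).mono_right nhdsWithin_le_nhds
  have g1 : Tendsto (fun p : ℝ × ℝ => R (-p.1) / p.1 ^ 2) L (nhds 0) := by
    have hneg : Tendsto (fun p : ℝ × ℝ => -p.1) L (nhds 0) := by
      simpa using h1.neg
    exact (hq.comp hneg).congr fun p => by
      simp [Function.comp, neg_sq]
  have g2 : Tendsto (fun p : ℝ × ℝ => R p.2 / p.2 ^ 2) L (nhds 0) := hq.comp h2'
  -- eventual positivity / smallness
  have hmem : ∀ᶠ p : ℝ × ℝ in L, (0 < p.1 ∧ p.1 < 1) ∧ (0 < p.2 ∧ p.2 < 1) := by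
    have hA : Set.Ioo (0:ℝ) 1 ∈ nhdsWithin (0:ℝ) (Set.Ioi 0) :=
      Ioo_mem_nhdsGT_of_mem ⟨le_refl 0, by norm_num⟩
    rw [hLdef]
    filter_upwards [Filter.prod_mem_prod hA hA] with p hp
    exact ⟨⟨hp.1.1, hp.1.2⟩, hp.2.1, hp.2.2⟩
  have T1 : Tendsto
      (fun p : ℝ × ℝ => (v₂ - μ * p.2) * (p.1 / (p.1 + p.2)) * (R (-p.1) / p.1 ^ 2))
      L (nhds 0) := by
    apply squeeze_zero_norm' (a := fun p : ℝ × ℝ => (|v₂| + |μ|) * |R (-p.1) / p.1 ^ 2|)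
    · filter_upwards [hmem] with p hp
      obtain ⟨⟨hp1, _⟩, hp2, hp2'⟩ := hp
      have hD : 0 < p.1 + p.2 := by linarith
      have hfrac : |p.1 / (p.1 + p.2)| ≤ 1 := by
        rw [abs_of_pos (div_pos hp1 hD), div_le_one hD]; linarith
      have hA : |v₂ - μ * p.2| ≤ |v₂| + |μ| := by
        refine (abs_sub _ _).trans ?_
        have : |μ * p.2| ≤ |μ| := by
          rw [abs_mul, abs_of_pos hp2]
          nlinarith [abs_nonneg μ]
        linarith
      rw [Real.norm_eq_abs, abs_mul, abs_mul]
      calc |v₂ - μ * p.2| * |p.1 / (p.1 + p.2)| * |R (-p.1) / p.1 ^ 2|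
          ≤ (|v₂| + |μ|) * 1 * |R (-p.1) / p.1 ^ 2| := by
            gcongr <;> positivity
        _ = (|v₂| + |μ|) * |R (-p.1) / p.1 ^ 2| := by ring
    · simpa using tendsto_const_nhds.mul g1.abs
  have T2 : Tendsto
      (fun p : ℝ × ℝ => (v₂ + μ * p.1) * (p.2 / (p.1 + p.2)) * (R p.2 / p.2 ^ 2))
      L (nhds 0) := by
    apply squeeze_zero_norm' (a := fun p : ℝ × ℝ => (|v₂| + |μ|) * |R p.2 / p.2 ^ 2|)
    · filter_upwards [hmem] with p hp
      obtain ⟨⟨hp1, hp1'⟩, hp2, _⟩ := hp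
      have hD : 0 < p.1 + p.2 := by linarith
      have hfrac : |p.2 / (p.1 + p.2)| ≤ 1 := by
        rw [abs_of_pos (div_pos hp2 hD), div_le_one hD]; linarith
      have hA : |v₂ + μ * p.1| ≤ |v₂| + |μ| := by
        refine (abs_add_le _ _).trans ?_
        have : |μ * p.1| ≤ |μ| := by
          rw [abs_mul, abs_of_pos hp1]
          nlinarith [abs_nonneg μ]
        linarith
      rw [Real.norm_eq_abs, abs_mul, abs_mul]
      calc |v₂ + μ * p.1| * |p.2 / (p.1 + p.2)| * |R p.2 / p.2 ^ 2|
          ≤ (|v₂| + |μ|) * 1 * |R p.2 / p.2 ^ 2| := by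
            gcongr <;> positivity
        _ = (|v₂| + |μ|) * |R p.2 / p.2 ^ 2| := by ring
    · simpa using tendsto_const_nhds.mul g2.abs
  have hsum : Tendsto
      (fun p : ℝ × ℝ => (μ * a + v₂ / 2 * c)
        + (v₂ - μ * p.2) * (p.1 / (p.1 + p.2)) * (R (-p.1) / p.1 ^ 2)
        + (v₂ + μ * p.1) * (p.2 / (p.1 + p.2)) * (R p.2 / p.2 ^ 2))
      L (nhds (μ * a + v₂ / 2 * c)) := by
    have := (tendsto_const_nhds
      (x := μ * a + v₂ / 2 * c) (f := L)).add T1 |>.add T2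
    simpa using this
  refine Tendsto.congr' ?_ hsum
  filter_upwards [hmem] with p hp
  obtain ⟨⟨hp1, _⟩, hp2, _⟩ := hp
  have hD : (0:ℝ) < p.1 + p.2 := by linarith
  have h1ne : p.1 ≠ 0 := ne_of_gt hp1
  have h2ne : p.2 ≠ 0 := ne_of_gt hp2
  have hDne : p.1 + p.2 ≠ 0 := ne_of_gt hD
  simp only [hRdef]
  have hG1 : G (v + -p.1) = G (v - p.1) := by rw [show v + -p.1 = v - p.1 by ring]
  rw [hG1]
  field_simp
  ring
end
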